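/- Let X be a nonzero positive semidefinite 2^n × 2^n complex matrix and let p > 0. Then the function p ↦ ‖X‖_p is differentiable at p with derivative Ent(X^p)/(p²·‖X‖_p^{p−1}). -/

import Mathlib

noncomputable section

open scoped Matrix ComplexOrder

/-- The algebra of operators on `(ℂ²)^{⊗ n}`, as `2^n × 2^n` matrices indexed by `Fin n → Fin 2`. -/
abbrev Mq (n : ℕ) := Matrix (Fin n → Fin 2) (Fin n → Fin 2) ℂ

/-- Normalized trace `τ(X) = 2^{-n} tr X`. -/
def qTau {n : ℕ} (X : Mq n) : ℂ := ((2 : ℂ) ^ n)⁻¹ * X.trace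

/-- Real part of the normalized trace. -/
def qTauR {n : ℕ} (X : Mq n) : ℝ := (qTau X).re

/-- Normalized Hilbert–Schmidt inner product `⟨X, Y⟩ = τ(X† Y)`. -/
def qInner {n : ℕ} (X Y : Mq n) : ℂ := qTau (Xᴴ * Y)

/-- `|X| = √(X† X)`. -/
def mAbs {n : ℕ} (X : Mq n) : Mq n :=
  (Matrix.posSemidef_conjTranspose_mul_self X).1.eigenvectorUnitary.1 *
    Matrix.diagonal ((↑) ∘ Real.sqrt ∘ (Matrix.posSemidef_conjTranspose_mul_self X).1.eigenvalues) *
    (star (Matrix.posSemidef_conjTranspose_mul_self X).1.eigenvectorUnitary : Mq n)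

/-- The entropy `Ent(X) = τ(X ln X) − τ(X) ln τ(X)` (with the convention `0 ln 0 = 0`),
for positive semidefinite `X`, via the continuous functional calculus. -/
def mEnt {n : ℕ} (X : Mq n) : ℝ :=
  qTauR (cfc (fun x : ℝ => x * Real.log x) X) - qTauR X * Real.log (qTauR X)

/-- Real powers `X^p` of a positive semidefinite matrix, by functional calculus on the
support (`0 ^ p = 0` for `p ≠ 0`). -/
def mPow {n : ℕ} (X : Mq n) (p : ℝ) : Mq n := cfc (fun x : ℝ => x ^ p) X

/-- Normalized Schatten `p`-norm `‖X‖_p = (τ(|X|^p))^{1/p}`. -/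
def schatten {n : ℕ} (p : ℝ) (X : Mq n) : ℝ := qTauR (mPow (mAbs X) p) ^ (1 / p)

/-- Conditional expectation onto the `i`-th qubit being maximally mixed:
`E_i = I^{⊗(i-1)} ⊗ (τ(·) I) ⊗ I^{⊗(n-i)}`. -/
def condExpQ {n : ℕ} (i : Fin n) (X : Mq n) : Mq n :=
  Matrix.of fun a b =>
    if a i = b i then
      (2 : ℂ)⁻¹ * ∑ c : Fin 2, X (Function.update a i c) (Function.update b i c)
    else 0

/-- The Lindblad generator `K_n = Σ_i L̂_i`, where `L̂_i` acts as `L(X) = X − τ(X) I`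
on the `i`-th tensor factor. -/
def Kq (n : ℕ) (X : Mq n) : Mq n := ∑ i : Fin n, (X - condExpQ i X)

/-- The depolarizing channel on the `i`-th qubit:
`e^{-t} X + (1 - e^{-t}) τ_i(X) ⊗ I_i`. -/
def depolStep {n : ℕ} (t : ℝ) (i : Fin n) (X : Mq n) : Mq n :=
  (Real.exp (-t) : ℂ) • X + ((1 : ℂ) - (Real.exp (-t) : ℂ)) • condExpQ i X

/-- `Ψ_t^{⊗ n}`: the `n`-fold tensor power of the qubit depolarizing channel, i.e. the
composition over all qubits `i` of the depolarizing channel acting on the `i`-th factor. -/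
def psiDep {n : ℕ} (t : ℝ) (X : Mq n) : Mq n :=
  (List.finRange n).foldr (fun i Y => depolStep t i Y) X

/-- The binary entropy function `h(s) = −s ln s − (1−s) ln(1−s)`. -/
def binEnt (s : ℝ) : ℝ := -(s * Real.log s) - (1 - s) * Real.log (1 - s)

/-- `h⁻¹ : [0, ln 2] → [0, 1/2]`, the inverse of the restriction of the binary entropy
function to `[0, 1/2]`. -/
def binEntInv (y : ℝ) : ℝ := Function.invFunOn binEnt (Set.Icc 0 (1 / 2)) y

/-- `φ(ξ) = 1/2 − √(h⁻¹(ln 2 − ξ)(1 − h⁻¹(ln 2 − ξ)))`. -/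
def phiF (ξ : ℝ) : ℝ :=
  1 / 2 - Real.sqrt (binEntInv (Real.log 2 - ξ) * (1 - binEntInv (Real.log 2 - ξ)))

/-- `α(ξ) = φ(ξ)/ξ` for `ξ ∈ (0, ln 2]`, with `α(0) = 1/2` by continuous extension. -/
def alphaF (ξ : ℝ) : ℝ := if ξ = 0 then 1 / 2 else ξ⁻¹ * phiF ξ

lemma trace_cfc_herm {n : ℕ} {X : Mq n} (hH : X.IsHermitian) (f : ℝ → ℝ) :
    (cfc f X).trace = ∑ i, (f (hH.eigenvalues i) : ℂ) := by
  rw [hH.cfc_eq, Matrix.IsHermitian.cfc, Unitary.conjStarAlgAut_apply, Matrix.trace_mul_cycle]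
  have h1 : (star (hH.eigenvectorUnitary : Mq n)) * (hH.eigenvectorUnitary : Mq n) = 1 :=
    Matrix.mem_unitaryGroup_iff'.mp (hH.eigenvectorUnitary).2
  rw [h1, one_mul, Matrix.trace_diagonal]
  rfl

lemma qTauR_cfc {n : ℕ} {X : Mq n} (hH : X.IsHermitian) (f : ℝ → ℝ) :
    qTauR (cfc f X) = ((2:ℝ) ^ n)⁻¹ * ∑ i, f (hH.eigenvalues i) := by
  rw [qTauR, qTau, trace_cfc_herm hH]
  rw [show ((2:ℂ)^n)⁻¹ * ∑ i, ((f (hH.eigenvalues i) : ℝ) : ℂ)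
      = ((((2:ℝ)^n)⁻¹ * ∑ i, f (hH.eigenvalues i) : ℝ) : ℂ) by push_cast; ring]
  exact Complex.ofReal_re _

/-- The derivative of `p ↦ ‖X‖_p` is `Ent(X^p) / (p² ‖X‖_p^{p−1})` for positive
semidefinite nonzero `X` (Lemma 1(i) of the paper). -/
theorem schatten_hasDerivAt (n : ℕ) (X : Mq n) (hX : X.PosSemidef) (hX0 : X ≠ 0)
    (p : ℝ) (hp : 0 < p) :
    HasDerivAt (fun q : ℝ => schatten q X)
      (mEnt (mPow X p) / (p ^ 2 * schatten p X ^ (p - 1))) p := by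
  have hH : X.IsHermitian := hX.1
  set v : (Fin n → Fin 2) → ℝ := hH.eigenvalues with hv
  have hvnn : ∀ i, 0 ≤ v i := fun i => hX.eigenvalues_nonneg i
  set c : ℝ := ((2:ℝ)^n)⁻¹ with hc
  have hcpos : 0 < c := by positivity
  -- |X| = X
  have habs : mAbs X = X := by
    have hA := Matrix.posSemidef_conjTranspose_mul_self X
    have e : mAbs X = cfc Real.sqrt (Xᴴ * X) := by
      rw [hA.1.cfc_eq, Matrix.IsHermitian.cfc, Unitary.conjStarAlgAut_apply]; rfl
    have hsa : IsSelfAdjoint X := hH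
    rw [e, hH.eq, show X * X = cfc (fun x : ℝ => x * x) X by
      rw [cfc_mul (fun x : ℝ => x) (fun x : ℝ => x) X, cfc_id' ℝ X]]
    rw [← cfc_comp Real.sqrt (fun x : ℝ => x * x) X]
    conv_rhs => rw [← cfc_id' ℝ X]
    apply cfc_congr
    intro x hx
    rw [hH.spectrum_real_eq_range_eigenvalues] at hx
    obtain ⟨i, rfl⟩ := hx
    simp [Real.sqrt_mul_self (hX.eigenvalues_nonneg i)]
  -- some eigenvalue is positive
  have hex : ∃ i, 0 < v i := by
    by_contra h
    push_neg at h
    have hz : ∀ i, v i = 0 := fun i => le_antisymm (h i) (hvnn i)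
    apply hX0
    rw [hH.spectral_theorem]
    have : (RCLike.ofReal ∘ hH.eigenvalues : (Fin n → Fin 2) → ℂ) = fun _ => 0 := by
      funext i
      simp only [Function.comp_apply]
      rw [show hH.eigenvalues i = 0 from hz i]
      simp
    rw [this]
    simp
  set F : ℝ → ℝ := fun q => c * ∑ i, v i ^ q with hF
  have hschat : ∀ q : ℝ, schatten q X = F q ^ (1/q) := by
    intro q
    rw [schatten, habs, mPow, qTauR_cfc hH]
  have hFpos : ∀ q : ℝ, 0 < F q := by
    intro q
    apply mul_pos hcpos
    obtain ⟨i0, hi0⟩ := hex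
    exact Finset.sum_pos' (fun i _ => Real.rpow_nonneg (hvnn i) q)
      ⟨i0, Finset.mem_univ i0, Real.rpow_pos_of_pos hi0 q⟩
  set F' : ℝ := c * ∑ i, v i ^ p * Real.log (v i) with hF'def
  have hF' : HasDerivAt F F' p := by
    apply HasDerivAt.const_mul
    apply HasDerivAt.fun_sum
    intro i _
    rcases eq_or_lt_of_le (hvnn i) with h0 | h0
    · rw [← h0]
      have hev : (fun q : ℝ => (0:ℝ) ^ q) =ᶠ[nhds p] fun _ => (0:ℝ) := by
        filter_upwards [Ioi_mem_nhds hp] with q hq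
        exact Real.zero_rpow (ne_of_gt hq)
      have : HasDerivAt (fun q : ℝ => (0:ℝ) ^ q) 0 p :=
        (hasDerivAt_const p (0:ℝ)).congr_of_eventuallyEq hev
      simpa [Real.zero_rpow hp.ne'] using this
    · exact (Real.hasStrictDerivAt_const_rpow h0 p).hasDerivAt
  set Fp : ℝ := F p with hFpdef
  have hFp : 0 < Fp := hFpos p
  have ht : 0 < Fp ^ (1/p) := Real.rpow_pos_of_pos hFp _
  have hinv : HasDerivAt (fun q : ℝ => 1/q) (-(1/p^2)) p := by
    simpa [one_div] using hasDerivAt_inv hp.ne'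
  have hG : HasDerivAt (fun q => F q ^ (1/q))
      (F' * (1/p) * Fp ^ (1/p - 1) + (-(1/p^2)) * Fp ^ (1/p) * Real.log Fp) p :=
    hF'.rpow hinv hFp
  have heq : (fun q : ℝ => schatten q X) = fun q => F q ^ (1/q) := funext hschat
  rw [heq]
  -- compute the entropy
  have h1 : qTauR (mPow X p) = Fp := by rw [mPow, qTauR_cfc hH]
  have h2 : qTauR (cfc (fun x : ℝ => x * Real.log x) (mPow X p)) = p * F' := by
    have hsa : IsSelfAdjoint X := hH
    rw [mPow, ← cfc_comp (fun x : ℝ => x * Real.log x) (fun x : ℝ => x ^ p) X hsa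
        (((Matrix.finite_real_spectrum (A := X)).image _).continuousOn _) ((Matrix.finite_real_spectrum (A := X)).continuousOn _),
      qTauR_cfc hH]
    have hterm : ∀ i, ((fun x : ℝ => x * Real.log x) ∘ fun x : ℝ => x ^ p) (v i)
        = p * (v i ^ p * Real.log (v i)) := by
      intro i
      rcases eq_or_lt_of_le (hvnn i) with h0 | h0
      · simp [← h0, Real.zero_rpow hp.ne']
      · simp only [Function.comp_apply, Real.log_rpow h0]; ring
    simp only [← hv, hterm]
    rw [← Finset.mul_sum]
    rw [hF'def]
    ring
  have hEnt : mEnt (mPow X p) = p * F' - Fp * Real.log Fp := by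
    rw [mEnt, h1, h2]
  rw [hEnt, hschat p]
  convert hG using 1
  have e1 : (Fp ^ (1/p)) ^ (p - 1) = Fp / Fp ^ (1/p) := by
    rw [← Real.rpow_mul hFp.le, show (1/p) * (p-1) = 1 - 1/p by field_simp,
      Real.rpow_sub hFp, Real.rpow_one]
  have e2 : Fp ^ (1/p - 1) = Fp ^ (1/p) / Fp := by
    rw [Real.rpow_sub hFp, Real.rpow_one]
  rw [e1, e2]
  field_simp
  ring

end
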